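/- arXiv:2011.13712 — 5 statements merged into one kernel-verified Lean document; each statement's English description precedes it below -/
import Mathlib

section
/- If γ = 0, then for every α ∈ [0,1), a ∈ ℂ and every E > 0 the transmission and reflection coefficients are independent of the energy E, with the explicit values T(α,a,0,E) = 2|a|²(1+cos πα)/(1+|a|²)² and R(α,a,0,E) = (1+|a|⁴−2|a|² cos πα)/(1+|a|²)². In particular, for the bridging protocol (a = 1, γ = 0) one has T = (1+cos πα)/2 and R = (1−cos πα)/2. -/
open Filter Topology

/-- The denominator `D(α,a,γ,E)` of the scattering amplitudes for the type-`II_a`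
transmission protocol across the Grushin singularity. -/
noncomputable def Dcoef (α : ℝ) (a : ℂ) (γ E : ℝ) : ℂ :=
  ((E ^ ((1 + α) / 2) * Real.Gamma ((1 - α) / 2) * (1 + ‖a‖ ^ 2) : ℝ) : ℂ)
    + Complex.I * (γ : ℂ) * (((2 : ℝ) ^ (1 + α) : ℝ) : ℂ)
      * Complex.exp (Complex.I * (Real.pi : ℂ) * (α : ℂ) / 2)
      * ((Real.Gamma ((3 + α) / 2) : ℝ) : ℂ)

/-- The transmission coefficient `T(α,a,γ,E)`. -/
noncomputable def Tcoef (α : ℝ) (a : ℂ) (γ E : ℝ) : ℝ :=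
  ‖(((E ^ ((1 + α) / 2) * Real.Gamma ((1 - α) / 2) : ℝ) : ℂ)
      * (1 + Complex.exp (Complex.I * (Real.pi : ℂ) * (α : ℂ)))
      * (starRingEnd ℂ a) / Dcoef α a γ E)‖ ^ 2

/-- The reflection coefficient `R(α,a,γ,E)`. -/
noncomputable def Rcoef (α : ℝ) (a : ℂ) (γ E : ℝ) : ℝ :=
  ‖((((E ^ ((1 + α) / 2) * Real.Gamma ((1 - α) / 2) : ℝ) : ℂ)
      * (1 - ((‖a‖ ^ 2 : ℝ) : ℂ) * Complex.exp (Complex.I * (Real.pi : ℂ) * (α : ℂ)))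
      + Complex.I * (γ : ℂ) * (((2 : ℝ) ^ (1 + α) : ℝ) : ℂ)
        * Complex.exp (Complex.I * (Real.pi : ℂ) * (α : ℂ) / 2)
        * ((Real.Gamma ((3 + α) / 2) : ℝ) : ℂ)) / Dcoef α a γ E)‖ ^ 2

lemma TRgen (α : ℝ) (hα : α ∈ Set.Ico (0 : ℝ) 1) (a : ℂ) (E : ℝ) (hE : 0 < E) :
    Tcoef α a 0 E
        = 2 * ‖a‖ ^ 2 * (1 + Real.cos (Real.pi * α))
          / (1 + ‖a‖ ^ 2) ^ 2 ∧
    Rcoef α a 0 E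
        = (1 + ‖a‖ ^ 4 - 2 * ‖a‖ ^ 2 * Real.cos (Real.pi * α))
          / (1 + ‖a‖ ^ 2) ^ 2 := by
  have hg : 0 < Real.Gamma ((1 - α) / 2) :=
    Real.Gamma_pos_of_pos (by linarith [hα.2])
  have hc : 0 < E ^ ((1 + α) / 2) * Real.Gamma ((1 - α) / 2) :=
    mul_pos (Real.rpow_pos_of_pos hE _) hg
  set c := E ^ ((1 + α) / 2) * Real.Gamma ((1 - α) / 2) with hcdef
  set r := ‖a‖ with hr
  have hr0 : 0 ≤ r := norm_nonneg a
  have hrpos : (0:ℝ) < 1 + r ^ 2 := by positivity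
  have hD : Dcoef α a 0 E = ((c * (1 + r ^ 2) : ℝ) : ℂ) := by
    simp [Dcoef, hcdef, hr]
  have he : Complex.exp (Complex.I * (Real.pi : ℂ) * (α : ℂ))
      = ((Real.cos (Real.pi * α) : ℝ) : ℂ) + ((Real.sin (Real.pi * α) : ℝ) : ℂ) * Complex.I := by
    rw [show Complex.I * (Real.pi : ℂ) * (α : ℂ) = ((Real.pi * α : ℝ) : ℂ) * Complex.I by
      push_cast; ring, Complex.exp_mul_I]
    push_cast
    ring
  have hsc := Real.sin_sq_add_cos_sq (Real.pi * α)
  constructor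
  · rw [Tcoef, norm_div, norm_mul, norm_mul, div_pow, mul_pow, mul_pow, hD,
      Complex.norm_real, Real.norm_eq_abs, Complex.norm_real, Real.norm_eq_abs, Complex.norm_conj, ← hr]
    have habs : ‖(1 + Complex.exp (Complex.I * (Real.pi : ℂ) * (α : ℂ)))‖ ^ 2
        = 2 + 2 * Real.cos (Real.pi * α) := by
      rw [he, show (1:ℂ) + (((Real.cos (Real.pi * α) : ℝ) : ℂ)
          + ((Real.sin (Real.pi * α) : ℝ) : ℂ) * Complex.I)
          = (((1 + Real.cos (Real.pi * α) : ℝ)) : ℂ)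
            + ((Real.sin (Real.pi * α) : ℝ) : ℂ) * Complex.I by push_cast; ring,
        Complex.sq_norm, Complex.normSq_add_mul_I]
      linear_combination hsc
    rw [habs, abs_of_pos hc, abs_of_pos (mul_pos hc hrpos)]
    field_simp
  · rw [Rcoef]
    simp only [Complex.ofReal_zero, mul_zero, zero_mul, add_zero]
    rw [norm_div, div_pow, hD, Complex.norm_real, Real.norm_eq_abs, ← hr]
    have habs : ‖(((c : ℝ) : ℂ)
        * (1 - ((r ^ 2 : ℝ) : ℂ) * Complex.exp (Complex.I * (Real.pi : ℂ) * (α : ℂ))))‖ ^ 2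
        = c ^ 2 * (1 + r ^ 4 - 2 * r ^ 2 * Real.cos (Real.pi * α)) := by
      rw [norm_mul, mul_pow, Complex.norm_real, Real.norm_eq_abs, he,
        show (1:ℂ) - ((r ^ 2 : ℝ) : ℂ) * (((Real.cos (Real.pi * α) : ℝ) : ℂ)
          + ((Real.sin (Real.pi * α) : ℝ) : ℂ) * Complex.I)
          = (((1 - r ^ 2 * Real.cos (Real.pi * α) : ℝ)) : ℂ)
            + ((-(r ^ 2 * Real.sin (Real.pi * α)) : ℝ) : ℂ) * Complex.I by push_cast; ring,
        Complex.sq_norm, Complex.normSq_add_mul_I, sq_abs]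
      linear_combination (c ^ 2 * r ^ 4) * hsc
    rw [habs, abs_of_pos (mul_pos hc hrpos)]
    field_simp


/-- for `γ = 0` the transmission and reflection coefficients are
independent of the energy `E`, with explicit values; in particular for the
bridging protocol (`a = 1`, `γ = 0`) one has `T = (1+cos πα)/2`, `R = (1−cos πα)/2`. -/
theorem TR_gamma_zero (α : ℝ) (hα : α ∈ Set.Ico (0 : ℝ) 1) (a : ℂ)
    (E : ℝ) (hE : 0 < E) :
    Tcoef α a 0 E
        = 2 * ‖a‖ ^ 2 * (1 + Real.cos (Real.pi * α))
          / (1 + ‖a‖ ^ 2) ^ 2 ∧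
    Rcoef α a 0 E
        = (1 + ‖a‖ ^ 4 - 2 * ‖a‖ ^ 2 * Real.cos (Real.pi * α))
          / (1 + ‖a‖ ^ 2) ^ 2 ∧
    Tcoef α 1 0 E = (1 + Real.cos (Real.pi * α)) / 2 ∧
    Rcoef α 1 0 E = (1 - Real.cos (Real.pi * α)) / 2 := by
  obtain ⟨hT, hR⟩ := TRgen α hα a E hE
  obtain ⟨hT1, hR1⟩ := TRgen α hα 1 E hE
  refine ⟨hT, hR, ?_, ?_⟩
  · rw [hT1]; simp; ring
  · rw [hR1]; simp; ring
end

section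
/- For every α ∈ [0,1), a ∈ ℂ and γ ∈ ℝ, in the high-energy limit the scattering is independent of the extension parameter γ: T(α,a,γ,E) → 2|a|²(1+cos πα)/(1+|a|²)² and R(α,a,γ,E) → (1+|a|⁴−2|a|² cos πα)/(1+|a|²)² as E → +∞. -/
open Filter Topology

/-- high-energy limit of the scattering coefficients, independent of
the extension parameter `γ`. -/
theorem TR_high_energy_limit (α : ℝ) (hα : α ∈ Set.Ico (0 : ℝ) 1) (a : ℂ) (γ : ℝ) :
    Tendsto (fun E : ℝ => Tcoef α a γ E) atTop
      (𝓝 (2 * ‖a‖ ^ 2 * (1 + Real.cos (Real.pi * α))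
        / (1 + ‖a‖ ^ 2) ^ 2)) ∧
    Tendsto (fun E : ℝ => Rcoef α a γ E) atTop
      (𝓝 ((1 + ‖a‖ ^ 4 - 2 * ‖a‖ ^ 2 * Real.cos (Real.pi * α))
        / (1 + ‖a‖ ^ 2) ^ 2)) := by
  obtain ⟨hα0, hα1⟩ := hα
  set p : ℝ := (1 + α) / 2 with hpdef
  have hp0 : 0 < p := by rw [hpdef]; linarith
  set g : ℝ := Real.Gamma ((1 - α) / 2) with hgdef
  have hg : 0 < g := Real.Gamma_pos_of_pos (by linarith)
  set K : ℂ := Complex.I * (γ : ℂ) * (((2 : ℝ) ^ (1 + α) : ℝ) : ℂ)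
      * Complex.exp (Complex.I * (Real.pi : ℂ) * (α : ℂ) / 2)
      * ((Real.Gamma ((3 + α) / 2) : ℝ) : ℂ) with hKdef
  set e : ℂ := Complex.exp (Complex.I * (Real.pi : ℂ) * (α : ℂ)) with hedef
  set r : ℝ := ‖a‖ with hrdef
  -- e in cartesian form
  have he : e = ((Real.cos (Real.pi * α) : ℝ) : ℂ) + ((Real.sin (Real.pi * α) : ℝ) : ℂ) * Complex.I := by
    rw [hedef, show Complex.I * (Real.pi : ℂ) * (α : ℂ) = ((Real.pi * α : ℝ) : ℂ) * Complex.I by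
      push_cast; ring, Complex.exp_mul_I, ← Complex.ofReal_cos, ← Complex.ofReal_sin]
  have hsc := Real.sin_sq_add_cos_sq (Real.pi * α)
  -- the inverse of E^p tends to 0 (in ℂ)
  have hEp : Tendsto (fun E : ℝ => ((E ^ p : ℝ) : ℂ)⁻¹) atTop (𝓝 0) := by
    have h1 : Tendsto (fun E : ℝ => (E ^ p)⁻¹) atTop (𝓝 0) :=
      (tendsto_rpow_atTop hp0).inv_tendsto_atTop
    have h2 := (Complex.continuous_ofReal.tendsto 0).comp h1
    simp only [Function.comp_def, Complex.ofReal_inv, Complex.ofReal_zero] at h2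
    exact h2
  have hL : ((g * (1 + r ^ 2) : ℝ) : ℂ) ≠ 0 := by
    rw [Complex.ofReal_ne_zero]
    positivity
  have hD : Tendsto (fun E : ℝ => Dcoef α a γ E / ((E ^ p : ℝ) : ℂ)) atTop
      (𝓝 ((g * (1 + r ^ 2) : ℝ) : ℂ)) := by
    have h1 : Tendsto (fun E : ℝ => ((g * (1 + r ^ 2) : ℝ) : ℂ) + K * ((E ^ p : ℝ) : ℂ)⁻¹)
        atTop (𝓝 (((g * (1 + r ^ 2) : ℝ) : ℂ) + K * 0)) :=
      tendsto_const_nhds.add (tendsto_const_nhds.mul hEp)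
    rw [mul_zero, add_zero] at h1
    refine h1.congr' ?_
    filter_upwards [eventually_gt_atTop (0 : ℝ)] with E hE
    have hne : ((E ^ p : ℝ) : ℂ) ≠ 0 := by
      rw [Complex.ofReal_ne_zero]
      exact (Real.rpow_pos_of_pos hE p).ne'
    rw [Dcoef, ← hpdef, ← hgdef, ← hKdef, ← hrdef]
    push_cast
    field_simp
  -- Transmission
  have hTval : ‖((g : ℝ) : ℂ) * (1 + e) * (starRingEnd ℂ a)
      / ((g * (1 + r ^ 2) : ℝ) : ℂ)‖ ^ 2
      = 2 * r ^ 2 * (1 + Real.cos (Real.pi * α)) / (1 + r ^ 2) ^ 2 := by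
    rw [norm_div, norm_mul, norm_mul, div_pow, mul_pow, mul_pow, Complex.sq_norm (1 + e), he,
      show (1 : ℂ) + (((Real.cos (Real.pi * α) : ℝ) : ℂ) + ((Real.sin (Real.pi * α) : ℝ) : ℂ) * Complex.I)
        = ((1 + Real.cos (Real.pi * α) : ℝ) : ℂ) + ((Real.sin (Real.pi * α) : ℝ) : ℂ) * Complex.I by
          push_cast; ring,
      Complex.normSq_add_mul_I, Complex.norm_real, Complex.norm_real, Real.norm_eq_abs, Real.norm_eq_abs, Complex.norm_conj,
      abs_of_pos hg, abs_of_pos (by positivity : (0:ℝ) < g * (1 + r ^ 2)), ← hrdef]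
    have h1r : (0:ℝ) < 1 + r ^ 2 := by positivity
    have hkey : (1 + Real.cos (Real.pi * α)) ^ 2 + Real.sin (Real.pi * α) ^ 2
        = 2 + 2 * Real.cos (Real.pi * α) := by linear_combination hsc
    rw [hkey]
    field_simp [hg.ne', h1r.ne']
  have hT : Tendsto (fun E : ℝ => Tcoef α a γ E) atTop
      (𝓝 (2 * r ^ 2 * (1 + Real.cos (Real.pi * α)) / (1 + r ^ 2) ^ 2)) := by
    rw [← hTval]
    have htend : Tendsto (fun E : ℝ => ((g : ℝ) : ℂ) * (1 + e) * (starRingEnd ℂ a)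
        / (Dcoef α a γ E / ((E ^ p : ℝ) : ℂ))) atTop
        (𝓝 (((g : ℝ) : ℂ) * (1 + e) * (starRingEnd ℂ a) / ((g * (1 + r ^ 2) : ℝ) : ℂ))) :=
      tendsto_const_nhds.div hD hL
    have := ((continuous_norm.tendsto _).comp htend).pow 2
    refine Tendsto.congr ?_ this
    intro E
    simp only [Function.comp]
    rw [Tcoef, ← hpdef, ← hgdef, ← hedef]
    congr 2
    rw [div_div_eq_mul_div]
    congr 1
    push_cast
    ring
  -- Reflection
  have hRval : ‖((g : ℝ) : ℂ) * (1 - ((r ^ 2 : ℝ) : ℂ) * e)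
      / ((g * (1 + r ^ 2) : ℝ) : ℂ)‖ ^ 2
      = (1 + r ^ 4 - 2 * r ^ 2 * Real.cos (Real.pi * α)) / (1 + r ^ 2) ^ 2 := by
    rw [norm_div, norm_mul, div_pow, mul_pow, Complex.sq_norm (1 - _), he,
      show (1 : ℂ) - ((r ^ 2 : ℝ) : ℂ) * (((Real.cos (Real.pi * α) : ℝ) : ℂ)
          + ((Real.sin (Real.pi * α) : ℝ) : ℂ) * Complex.I)
        = ((1 - r ^ 2 * Real.cos (Real.pi * α) : ℝ) : ℂ)
          + ((- (r ^ 2 * Real.sin (Real.pi * α)) : ℝ) : ℂ) * Complex.I by push_cast; ring,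
      Complex.normSq_add_mul_I, Complex.norm_real, Complex.norm_real, Real.norm_eq_abs, Real.norm_eq_abs,
      abs_of_pos hg, abs_of_pos (by positivity : (0:ℝ) < g * (1 + r ^ 2))]
    have h1r : (0:ℝ) < 1 + r ^ 2 := by positivity
    have hkey : (1 - r ^ 2 * Real.cos (Real.pi * α)) ^ 2
        + (-(r ^ 2 * Real.sin (Real.pi * α))) ^ 2
        = 1 + r ^ 4 - 2 * r ^ 2 * Real.cos (Real.pi * α) := by
      linear_combination (r ^ 4) * hsc
    rw [hkey]
    field_simp [hg.ne', h1r.ne']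
  have hR : Tendsto (fun E : ℝ => Rcoef α a γ E) atTop
      (𝓝 ((1 + r ^ 4 - 2 * r ^ 2 * Real.cos (Real.pi * α)) / (1 + r ^ 2) ^ 2)) := by
    rw [← hRval]
    have hnum : Tendsto (fun E : ℝ => ((g : ℝ) : ℂ) * (1 - ((r ^ 2 : ℝ) : ℂ) * e)
        + K * ((E ^ p : ℝ) : ℂ)⁻¹) atTop
        (𝓝 (((g : ℝ) : ℂ) * (1 - ((r ^ 2 : ℝ) : ℂ) * e) + K * 0)) :=
      tendsto_const_nhds.add (tendsto_const_nhds.mul hEp)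
    rw [mul_zero, add_zero] at hnum
    have htend := hnum.div hD hL
    have h2 := ((continuous_norm.tendsto _).comp htend).pow 2
    refine Tendsto.congr' ?_ h2
    filter_upwards [eventually_gt_atTop (0 : ℝ)] with E hE
    have hne : ((E ^ p : ℝ) : ℂ) ≠ 0 := by
      rw [Complex.ofReal_ne_zero]
      exact (Real.rpow_pos_of_pos hE p).ne'
    simp only [Function.comp, Pi.div_apply]
    rw [Rcoef, ← hpdef, ← hgdef, ← hedef, ← hKdef, ← hrdef]
    congr 2
    rw [div_div_eq_mul_div]
    congr 1
    push_cast
    field_simp [hne]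
  exact ⟨hT, hR⟩
end

section
/- For every α ∈ [0,1), a ∈ ℂ and γ ∈ ℝ with γ ≠ 0, in the low-energy limit the scattering becomes totally reflecting: T(α,a,γ,E) → 0 and R(α,a,γ,E) → 1 as E → 0⁺. -/
open Filter Topology

/-- low-energy limit of the scattering coefficients for `γ ≠ 0`:
total reflection. -/
theorem TR_low_energy_limit (α : ℝ) (hα : α ∈ Set.Ico (0 : ℝ) 1) (a : ℂ) (γ : ℝ)
    (hγ : γ ≠ 0) :
    Tendsto (fun E : ℝ => Tcoef α a γ E) (𝓝[>] 0) (𝓝 0) ∧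
    Tendsto (fun E : ℝ => Rcoef α a γ E) (𝓝[>] 0) (𝓝 1) := by
  obtain ⟨hα0, hα1⟩ := hα
  set c : ℂ := Complex.I * (γ : ℂ) * (((2 : ℝ) ^ (1 + α) : ℝ) : ℂ)
      * Complex.exp (Complex.I * (Real.pi : ℂ) * (α : ℂ) / 2)
      * ((Real.Gamma ((3 + α) / 2) : ℝ) : ℂ) with hc_def
  have hΓ3 : 0 < Real.Gamma ((3 + α) / 2) := Real.Gamma_pos_of_pos (by linarith)
  have h2 : (0 : ℝ) < (2 : ℝ) ^ (1 + α) := Real.rpow_pos_of_pos (by norm_num) _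
  have hc : c ≠ 0 := by
    refine mul_ne_zero (mul_ne_zero (mul_ne_zero (mul_ne_zero Complex.I_ne_zero
      (Complex.ofReal_ne_zero.mpr hγ)) (Complex.ofReal_ne_zero.mpr h2.ne'))
      (Complex.exp_ne_zero _)) (Complex.ofReal_ne_zero.mpr hΓ3.ne')
  have hp : 0 < (1 + α) / 2 := by linarith
  have ht : Tendsto (fun E : ℝ => E ^ ((1 + α) / 2)) (𝓝[>] (0 : ℝ)) (𝓝 0) := by
    have h := (Real.continuousAt_rpow_const 0 ((1 + α) / 2) (Or.inr hp.le)).tendsto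
    rw [Real.zero_rpow hp.ne'] at h
    exact h.mono_left nhdsWithin_le_nhds
  have hs : Tendsto (fun E : ℝ => ((E ^ ((1 + α) / 2) : ℝ) : ℂ)) (𝓝[>] (0 : ℝ)) (𝓝 0) := by
    have := (Complex.continuous_ofReal.tendsto 0).comp ht
    exact this
  have hD : Tendsto (fun E : ℝ => Dcoef α a γ E) (𝓝[>] (0 : ℝ)) (𝓝 c) := by
    have heq : ∀ E : ℝ, Dcoef α a γ E =
        ((E ^ ((1 + α) / 2) : ℝ) : ℂ) * ((Real.Gamma ((1 - α) / 2) : ℝ) : ℂ)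
          * (((1 + ‖a‖ ^ 2 : ℝ)) : ℂ) + c := by
      intro E
      simp only [Dcoef, hc_def]
      push_cast
      ring
    rw [show (c : ℂ) = 0 * ((Real.Gamma ((1 - α) / 2) : ℝ) : ℂ)
        * (((1 + ‖a‖ ^ 2 : ℝ)) : ℂ) + c by ring]
    exact Tendsto.congr (fun E => (heq E).symm) (((hs.mul_const _).mul_const _).add_const c)
  constructor
  · have hT0 : Tendsto (fun E : ℝ =>
        ((E ^ ((1 + α) / 2) * Real.Gamma ((1 - α) / 2) : ℝ) : ℂ)
          * (1 + Complex.exp (Complex.I * (Real.pi : ℂ) * (α : ℂ)))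
          * (starRingEnd ℂ a) / Dcoef α a γ E) (𝓝[>] (0 : ℝ)) (𝓝 0) := by
      have hnum : Tendsto (fun E : ℝ =>
          ((E ^ ((1 + α) / 2) * Real.Gamma ((1 - α) / 2) : ℝ) : ℂ)
            * (1 + Complex.exp (Complex.I * (Real.pi : ℂ) * (α : ℂ)))
            * (starRingEnd ℂ a)) (𝓝[>] (0 : ℝ)) (𝓝 0) := by
        have := (((hs.mul_const ((Real.Gamma ((1 - α) / 2) : ℝ) : ℂ)).mul_const
            (1 + Complex.exp (Complex.I * (Real.pi : ℂ) * (α : ℂ)))).mul_const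
            (starRingEnd ℂ a))
        simpa [Complex.ofReal_mul, mul_assoc] using this
      simpa [Pi.div_def] using hnum.div hD hc
    have := (continuous_norm.tendsto 0).comp hT0
    have h2 := this.pow 2
    simpa [Tcoef, Function.comp] using h2
  · have hR1 : Tendsto (fun E : ℝ =>
        (((E ^ ((1 + α) / 2) * Real.Gamma ((1 - α) / 2) : ℝ) : ℂ)
          * (1 - ((‖a‖ ^ 2 : ℝ) : ℂ)
              * Complex.exp (Complex.I * (Real.pi : ℂ) * (α : ℂ))) + c)
          / Dcoef α a γ E) (𝓝[>] (0 : ℝ)) (𝓝 1) := by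
      have hnum : Tendsto (fun E : ℝ =>
          ((E ^ ((1 + α) / 2) * Real.Gamma ((1 - α) / 2) : ℝ) : ℂ)
            * (1 - ((‖a‖ ^ 2 : ℝ) : ℂ)
                * Complex.exp (Complex.I * (Real.pi : ℂ) * (α : ℂ))) + c)
          (𝓝[>] (0 : ℝ)) (𝓝 c) := by
        have := ((hs.mul_const ((Real.Gamma ((1 - α) / 2) : ℝ) : ℂ)).mul_const
            (1 - ((‖a‖ ^ 2 : ℝ) : ℂ)
              * Complex.exp (Complex.I * (Real.pi : ℂ) * (α : ℂ)))).add_const c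
        simpa [Complex.ofReal_mul, mul_assoc] using this
      simpa [div_self hc, Pi.div_def] using hnum.div hD hc
    have := (continuous_norm.tendsto 1).comp hR1
    have h2 := this.pow 2
    simpa [Rcoef, hc_def, Function.comp] using h2
end

section
/- Let α ∈ (0,1), a ∈ ℂ with |a| = 1, and γ > 0. Then the scattering is reflection-less at the energy E := (2^{1+α}·γ·Γ((3+α)/2)·sin(πα/2) / (Γ((1−α)/2)·(1−cos πα)))^{2/(1+α)}; that is, E > 0, R(α,a,γ,E) = 0 and T(α,a,γ,E) = 1. -/
open Filter Topology

/-- for `α ∈ (0,1)`, `|a| = 1` and `γ > 0`, the scattering is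
reflection-less at the distinguished energy `E`. -/
theorem reflectionless_energy (α : ℝ) (hα : α ∈ Set.Ioo (0 : ℝ) 1) (a : ℂ)
    (ha : ‖a‖ = 1) (γ : ℝ) (hγ : 0 < γ) :
    let E : ℝ := ((2 : ℝ) ^ (1 + α) * γ * Real.Gamma ((3 + α) / 2)
        * Real.sin (Real.pi * α / 2)
        / (Real.Gamma ((1 - α) / 2) * (1 - Real.cos (Real.pi * α)))) ^ (2 / (1 + α))
    0 < E ∧ Rcoef α a γ E = 0 ∧ Tcoef α a γ E = 1 := by
  obtain ⟨hα0, hα1⟩ := hα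
  intro E
  have hEdef : E = ((2 : ℝ) ^ (1 + α) * γ * Real.Gamma ((3 + α) / 2)
        * Real.sin (Real.pi * α / 2)
        / (Real.Gamma ((1 - α) / 2) * (1 - Real.cos (Real.pi * α)))) ^ (2 / (1 + α)) := rfl
  have hπ := Real.pi_pos
  set θ := Real.pi * α / 2 with hθ
  have hθ0 : 0 < θ := by rw [hθ]; positivity
  have hθ2 : θ < Real.pi / 2 := by rw [hθ]; nlinarith
  have hs : 0 < Real.sin θ := Real.sin_pos_of_pos_of_lt_pi hθ0 (by linarith)
  have hc : 0 < Real.cos θ := Real.cos_pos_of_mem_Ioo ⟨by linarith, hθ2⟩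
  have hpyth : Real.sin θ ^ 2 + Real.cos θ ^ 2 = 1 := Real.sin_sq_add_cos_sq θ
  have hΓ1 : 0 < Real.Gamma ((1 - α) / 2) := Real.Gamma_pos_of_pos (by linarith)
  have hΓ3 : 0 < Real.Gamma ((3 + α) / 2) := Real.Gamma_pos_of_pos (by linarith)
  have hcos2 : 1 - Real.cos (Real.pi * α) = 2 * Real.sin θ ^ 2 := by
    have h2θ : Real.pi * α = 2 * θ := by rw [hθ]; ring
    rw [h2θ, Real.cos_two_mul]; nlinarith
  set B : ℝ := (2 : ℝ) ^ (1 + α) * γ * Real.Gamma ((3 + α) / 2) * Real.sin θ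
      / (Real.Gamma ((1 - α) / 2) * (1 - Real.cos (Real.pi * α))) with hB
  have hden : 0 < Real.Gamma ((1 - α) / 2) * (1 - Real.cos (Real.pi * α)) := by
    rw [hcos2]; positivity
  have hBpos : 0 < B := div_pos (by positivity) hden
  have hE : 0 < E := by rw [hEdef]; exact Real.rpow_pos_of_pos hBpos _
  have hα1' : (1 : ℝ) + α ≠ 0 := by linarith
  have hXB : E ^ ((1 + α) / 2) = B := by
    rw [hEdef, ← Real.rpow_mul hBpos.le,
      show 2 / (1 + α) * ((1 + α) / 2) = 1 by field_simp, Real.rpow_one]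
  have key : γ * (2 : ℝ) ^ (1 + α) * Real.Gamma ((3 + α) / 2)
      = 2 * (B * Real.Gamma ((1 - α) / 2)) * Real.sin θ := by
    rw [hB, hcos2]
    field_simp
  have he : Complex.exp (Complex.I * (Real.pi : ℂ) * (α : ℂ) / 2)
      = ((Real.cos θ : ℝ) : ℂ) + ((Real.sin θ : ℝ) : ℂ) * Complex.I := by
    have h1 : Complex.I * (Real.pi : ℂ) * (α : ℂ) / 2 = ((θ : ℝ) : ℂ) * Complex.I := by
      rw [hθ]; push_cast; ring
    rw [h1, Complex.exp_mul_I, ← Complex.ofReal_cos, ← Complex.ofReal_sin]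
  have he2 : Complex.exp (Complex.I * (Real.pi : ℂ) * (α : ℂ))
      = (((Real.cos θ : ℝ) : ℂ) + ((Real.sin θ : ℝ) : ℂ) * Complex.I) ^ 2 := by
    have h1 : Complex.I * (Real.pi : ℂ) * (α : ℂ)
        = Complex.I * (Real.pi : ℂ) * (α : ℂ) / 2 + Complex.I * (Real.pi : ℂ) * (α : ℂ) / 2 := by
      ring
    rw [h1, Complex.exp_add, he]; ring
  have hpC : Complex.sin ((θ : ℝ) : ℂ) ^ 2 + Complex.cos ((θ : ℝ) : ℂ) ^ 2 = 1 :=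
    Complex.sin_sq_add_cos_sq _
  have keyC : (γ : ℂ) * (((2 : ℝ) ^ (1 + α) : ℝ) : ℂ) * ((Real.Gamma ((3 + α) / 2) : ℝ) : ℂ)
      = 2 * ((B : ℝ) : ℂ) * ((Real.Gamma ((1 - α) / 2) : ℝ) : ℂ) * Complex.sin ((θ : ℝ) : ℂ) := by
    have h := congrArg (Complex.ofReal) key
    push_cast at h
    linear_combination h
  have hRnum : ((E ^ ((1 + α) / 2) * Real.Gamma ((1 - α) / 2) : ℝ) : ℂ)
      * (1 - ((‖a‖ ^ 2 : ℝ) : ℂ) * Complex.exp (Complex.I * (Real.pi : ℂ) * (α : ℂ)))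
      + Complex.I * (γ : ℂ) * (((2 : ℝ) ^ (1 + α) : ℝ) : ℂ)
        * Complex.exp (Complex.I * (Real.pi : ℂ) * (α : ℂ) / 2)
        * ((Real.Gamma ((3 + α) / 2) : ℝ) : ℂ) = 0 := by
    rw [hXB, ha, he, he2]
    push_cast
    linear_combination (-(B : ℂ) * ((Real.Gamma ((1 - α) / 2) : ℝ) : ℂ)) * hpC
      + (Complex.cos ((θ : ℝ) : ℂ) * Complex.I - Complex.sin ((θ : ℝ) : ℂ)) * keyC
      + (Complex.sin ((θ : ℝ) : ℂ) * ((γ : ℂ) * (((2 : ℝ) ^ (1 + α) : ℝ) : ℂ)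
          * ((Real.Gamma ((3 + α) / 2) : ℝ) : ℂ))
        - ((B : ℝ) : ℂ) * ((Real.Gamma ((1 - α) / 2) : ℝ) : ℂ)
          * Complex.sin ((θ : ℝ) : ℂ) ^ 2) * Complex.I_sq
  have hD : Dcoef α a γ E
      = 2 * ((B : ℝ) : ℂ) * ((Real.Gamma ((1 - α) / 2) : ℝ) : ℂ) * ((Real.cos θ : ℝ) : ℂ)
        * (((Real.cos θ : ℝ) : ℂ) + ((Real.sin θ : ℝ) : ℂ) * Complex.I) := by
    unfold Dcoef
    rw [hXB, ha, he]
    push_cast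
    linear_combination (-2 * (B : ℂ) * ((Real.Gamma ((1 - α) / 2) : ℝ) : ℂ)) * hpC
      + (Complex.cos ((θ : ℝ) : ℂ) * Complex.I - Complex.sin ((θ : ℝ) : ℂ)) * keyC
      + ((γ : ℂ) * (((2 : ℝ) ^ (1 + α) : ℝ) : ℂ) * Complex.sin ((θ : ℝ) : ℂ)
          * ((Real.Gamma ((3 + α) / 2) : ℝ) : ℂ)) * Complex.I_sq
  have hfac : (((Real.cos θ : ℝ) : ℂ) + ((Real.sin θ : ℝ) : ℂ) * Complex.I) ≠ 0 := by
    intro h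
    have := congrArg Complex.re h
    simp [Complex.cos_ofReal_re] at this
    linarith
  have hDne : Dcoef α a γ E ≠ 0 := by
    rw [hD]
    refine mul_ne_zero (mul_ne_zero (mul_ne_zero (mul_ne_zero two_ne_zero ?_) ?_) ?_) hfac
    · exact_mod_cast hBpos.ne'
    · exact_mod_cast hΓ1.ne'
    · exact_mod_cast hc.ne'
  have hTnum : ((E ^ ((1 + α) / 2) * Real.Gamma ((1 - α) / 2) : ℝ) : ℂ)
      * (1 + Complex.exp (Complex.I * (Real.pi : ℂ) * (α : ℂ)))
      * (starRingEnd ℂ a) = Dcoef α a γ E * (starRingEnd ℂ a) := by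
    rw [hD, hXB, he2]
    push_cast
    linear_combination (-(B : ℂ) * ((Real.Gamma ((1 - α) / 2) : ℝ) : ℂ) * (starRingEnd ℂ a)) * hpC
      + (((B : ℝ) : ℂ) * ((Real.Gamma ((1 - α) / 2) : ℝ) : ℂ) * Complex.sin ((θ : ℝ) : ℂ) ^ 2
          * (starRingEnd ℂ a)) * Complex.I_sq
  refine ⟨hE, ?_, ?_⟩
  · unfold Rcoef
    rw [hRnum]
    simp
  · unfold Tcoef
    rw [hTnum, mul_div_cancel_left₀ _ hDne]
    simp [ha]
end

section
/- For every fixed a ∈ ℂ, γ ∈ ℝ and E > 0, at the upper edge of the admissible range of the metric parameter the transmission is completely suppressed: T(α,a,γ,E) → 0 and R(α,a,γ,E) → 1 as α → 1⁻ (limit along α ∈ [0,1) tending to 1 from the left). -/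
open Filter Topology

/-- The reciprocal of the blowing-up Gamma factor, as a complex number. -/
noncomputable def gC (α : ℝ) : ℂ := ((Real.Gamma ((1 - α) / 2))⁻¹ : ℝ)

lemma g_tendsto : Tendsto (fun α : ℝ => ((Real.Gamma ((1 - α) / 2))⁻¹ : ℝ)) (𝓝 1) (𝓝 0) := by
  have h1 : Tendsto (fun α : ℝ => (1 - α) / 2) (𝓝 1) (𝓝 0) := by
    have : Continuous (fun α : ℝ => (1 - α) / 2) := by continuity
    simpa using this.tendsto 1
  have heq : (fun x : ℝ => (Real.Gamma x)⁻¹) = fun x : ℝ => ((Complex.Gamma x)⁻¹).re := by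
    funext x; rw [Complex.Gamma_ofReal, ← Complex.ofReal_inv, Complex.ofReal_re]
  have h2 : Tendsto (fun x : ℝ => (Real.Gamma x)⁻¹) (𝓝 0) (𝓝 0) := by
    rw [heq]
    have hc : Continuous fun x : ℝ => ((Complex.Gamma x)⁻¹).re :=
      Complex.continuous_re.comp
        (Complex.differentiable_one_div_Gamma.continuous.comp Complex.continuous_ofReal)
    have := hc.tendsto 0
    simpa [Complex.Gamma_ofReal, Real.Gamma_zero] using this
  exact h2.comp h1

lemma gC_tendsto : Tendsto gC (𝓝 1) (𝓝 0) := by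
  have := (Complex.continuous_ofReal.tendsto 0).comp g_tendsto
  rw [show gC = Complex.ofReal ∘ fun α : ℝ => (Real.Gamma ((1 - α) / 2))⁻¹ from rfl]
  simpa using this

/-- The "gamma-interaction" term of `Dcoef`, multiplied by `gC`, tends to `0`. -/
lemma second_term_tendsto (γ : ℝ) :
    Tendsto (fun α : ℝ => Complex.I * (γ : ℂ) * (((2 : ℝ) ^ (1 + α) : ℝ) : ℂ)
      * Complex.exp (Complex.I * (Real.pi : ℂ) * (α : ℂ) / 2)
      * ((Real.Gamma ((3 + α) / 2) : ℝ) : ℂ) * gC α) (𝓝 1) (𝓝 0) := by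
  have h2 : ContinuousAt (fun α : ℝ => ((2:ℝ) ^ (1 + α))) 1 :=
    (Real.continuousAt_const_rpow two_ne_zero).comp (by fun_prop)
  have hG : ContinuousAt (fun α : ℝ => Real.Gamma ((3 + α) / 2)) 1 := by
    apply ContinuousAt.comp (Real.differentiableAt_Gamma ?_).continuousAt (by fun_prop)
    · intro m h
      norm_num at h
      linarith [Nat.cast_nonneg (α := ℝ) m]
  have hexp : ContinuousAt (fun α : ℝ => Complex.exp (Complex.I * (Real.pi : ℂ) * (α : ℂ) / 2)) 1 := by
    fun_prop
  have hC : ContinuousAt (fun α : ℝ => Complex.I * (γ : ℂ) * (((2:ℝ) ^ (1+α) : ℝ) : ℂ)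
      * Complex.exp (Complex.I * (Real.pi:ℂ) * (α:ℂ) / 2) * ((Real.Gamma ((3+α)/2) : ℝ):ℂ)) 1 :=
    ((continuousAt_const.mul (Complex.continuous_ofReal.continuousAt.comp h2)).mul hexp).mul
      (Complex.continuous_ofReal.continuousAt.comp hG)
  have := hC.tendsto.mul gC_tendsto
  simpa using this

lemma Epow_tendsto {E : ℝ} (hE : 0 < E) :
    Tendsto (fun α : ℝ => ((E ^ ((1 + α) / 2) : ℝ) : ℂ)) (𝓝 1) (𝓝 (E : ℂ)) := by
  have h1 : ContinuousAt (fun α : ℝ => E ^ ((1 + α) / 2)) 1 :=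
    (Real.continuousAt_const_rpow hE.ne').comp (by fun_prop)
  have := (Complex.continuous_ofReal.continuousAt.comp h1).tendsto
  simp only [Function.comp] at this
  convert this using 2
  · rfl
  · rw [show ((1:ℝ) + 1) / 2 = 1 by norm_num, Real.rpow_one]

lemma exp_pi_alpha_tendsto :
    Tendsto (fun α : ℝ => Complex.exp (Complex.I * (Real.pi : ℂ) * (α : ℂ))) (𝓝 1) (𝓝 (-1)) := by
  have hc : ContinuousAt (fun α : ℝ => Complex.exp (Complex.I * (Real.pi : ℂ) * (α : ℂ))) 1 := by
    fun_prop
  have := hc.tendsto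
  have h1 : Complex.I * (Real.pi : ℂ) * ((1:ℝ) : ℂ) = (Real.pi : ℂ) * Complex.I := by
    push_cast; ring
  rwa [h1, Complex.exp_pi_mul_I] at this

/-- at the upper edge `α → 1⁻` of the admissible range of the metric
parameter (along `α ∈ [0,1)`), the transmission is completely suppressed. -/
theorem TR_alpha_to_one (a : ℂ) (γ E : ℝ) (hE : 0 < E) :
    Tendsto (fun α : ℝ => Tcoef α a γ E) (𝓝[Set.Ico (0 : ℝ) 1] 1) (𝓝 0) ∧
    Tendsto (fun α : ℝ => Rcoef α a γ E) (𝓝[Set.Ico (0 : ℝ) 1] 1) (𝓝 1) := by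
  set F := 𝓝[Set.Ico (0 : ℝ) 1] 1 with hF
  have hFle : F ≤ 𝓝 1 := nhdsWithin_le_nhds
  -- Gamma is positive on the admissible range
  have hΓ : ∀ α ∈ Set.Ico (0:ℝ) 1, Real.Gamma ((1 - α) / 2) ≠ 0 := by
    intro α hα
    exact (Real.Gamma_pos_of_pos (by simp only [Set.mem_Ico] at hα; linarith [hα.2])).ne'
  have hgne : ∀ α ∈ Set.Ico (0:ℝ) 1, gC α ≠ 0 := by
    intro α hα
    simpa [gC, Complex.ofReal_ne_zero] using inv_ne_zero (hΓ α hα)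
  set L : ℂ := ((E * (1 + ‖a‖ ^ 2) : ℝ) : ℂ) with hLdef
  have hL : L ≠ 0 := by
    rw [hLdef, Complex.ofReal_ne_zero]
    positivity
  -- limit of D * gC
  have hD : Tendsto (fun α => Dcoef α a γ E * gC α) F (𝓝 L) := by
    have heq : ∀ α ∈ Set.Ico (0:ℝ) 1, Dcoef α a γ E * gC α =
        ((E ^ ((1 + α) / 2) * (1 + ‖a‖ ^ 2) : ℝ) : ℂ)
          + Complex.I * (γ : ℂ) * (((2 : ℝ) ^ (1 + α) : ℝ) : ℂ)
            * Complex.exp (Complex.I * (Real.pi : ℂ) * (α : ℂ) / 2)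
            * ((Real.Gamma ((3 + α) / 2) : ℝ) : ℂ) * gC α := by
      intro α hα
      have h := hΓ α hα
      simp only [Dcoef, gC]
      push_cast
      have h' : ((Real.Gamma ((1 - α) / 2) : ℝ) : ℂ) ≠ 0 := Complex.ofReal_ne_zero.mpr h
      field_simp
    have h1 : Tendsto (fun α : ℝ => ((E ^ ((1 + α) / 2) * (1 + ‖a‖ ^ 2) : ℝ) : ℂ)) F (𝓝 L) := by
      have := (Epow_tendsto hE).mul (tendsto_const_nhds (x := ((1 + ‖a‖ ^ 2 : ℝ) : ℂ)))
      have h2 : Tendsto (fun α : ℝ => ((E ^ ((1 + α) / 2) * (1 + ‖a‖ ^ 2) : ℝ) : ℂ)) (𝓝 1)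
          (𝓝 ((E : ℂ) * ((1 + ‖a‖ ^ 2 : ℝ) : ℂ))) := by
        convert this using 2 <;> push_cast <;> ring
      have : L = (E : ℂ) * ((1 + ‖a‖ ^ 2 : ℝ) : ℂ) := by rw [hLdef]; push_cast; ring
      rw [this]
      exact h2.mono_left hFle
    have h2 := (second_term_tendsto γ).mono_left hFle
    have := h1.add h2
    rw [add_zero] at this
    exact this.congr' (by filter_upwards [self_mem_nhdsWithin] with α hα using (heq α hα).symm)
  -- limit of the T numerator * gC
  have hNT : Tendsto (fun α : ℝ => ((E ^ ((1 + α) / 2) * Real.Gamma ((1 - α) / 2) : ℝ) : ℂ)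
      * (1 + Complex.exp (Complex.I * (Real.pi : ℂ) * (α : ℂ)))
      * (starRingEnd ℂ a) * gC α) F (𝓝 0) := by
    have heq : ∀ α ∈ Set.Ico (0:ℝ) 1,
        ((E ^ ((1 + α) / 2) * Real.Gamma ((1 - α) / 2) : ℝ) : ℂ)
          * (1 + Complex.exp (Complex.I * (Real.pi : ℂ) * (α : ℂ))) * (starRingEnd ℂ a) * gC α
        = ((E ^ ((1 + α) / 2) : ℝ) : ℂ)
          * (1 + Complex.exp (Complex.I * (Real.pi : ℂ) * (α : ℂ))) * (starRingEnd ℂ a) := by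
      intro α hα
      have h' : ((Real.Gamma ((1 - α) / 2) : ℝ) : ℂ) ≠ 0 := Complex.ofReal_ne_zero.mpr (hΓ α hα)
      simp only [gC]
      push_cast
      field_simp
    have h1 := ((Epow_tendsto hE).mul
      ((tendsto_const_nhds (x := (1:ℂ))).add exp_pi_alpha_tendsto)).mul
      (tendsto_const_nhds (x := starRingEnd ℂ a))
    simp only [add_neg_cancel, mul_zero, zero_mul] at h1
    exact (h1.mono_left hFle).congr'
      (by filter_upwards [self_mem_nhdsWithin] with α hα using (heq α hα).symm)
  -- limit of the R numerator * gC
  have hNR : Tendsto (fun α : ℝ => (((E ^ ((1 + α) / 2) * Real.Gamma ((1 - α) / 2) : ℝ) : ℂ)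
      * (1 - ((‖a‖ ^ 2 : ℝ) : ℂ) * Complex.exp (Complex.I * (Real.pi : ℂ) * (α : ℂ)))
      + Complex.I * (γ : ℂ) * (((2 : ℝ) ^ (1 + α) : ℝ) : ℂ)
        * Complex.exp (Complex.I * (Real.pi : ℂ) * (α : ℂ) / 2)
        * ((Real.Gamma ((3 + α) / 2) : ℝ) : ℂ)) * gC α) F (𝓝 L) := by
    have heq : ∀ α ∈ Set.Ico (0:ℝ) 1,
        (((E ^ ((1 + α) / 2) * Real.Gamma ((1 - α) / 2) : ℝ) : ℂ)
          * (1 - ((‖a‖ ^ 2 : ℝ) : ℂ) * Complex.exp (Complex.I * (Real.pi : ℂ) * (α : ℂ)))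
          + Complex.I * (γ : ℂ) * (((2 : ℝ) ^ (1 + α) : ℝ) : ℂ)
            * Complex.exp (Complex.I * (Real.pi : ℂ) * (α : ℂ) / 2)
            * ((Real.Gamma ((3 + α) / 2) : ℝ) : ℂ)) * gC α
        = ((E ^ ((1 + α) / 2) : ℝ) : ℂ)
          * (1 - ((‖a‖ ^ 2 : ℝ) : ℂ) * Complex.exp (Complex.I * (Real.pi : ℂ) * (α : ℂ)))
          + Complex.I * (γ : ℂ) * (((2 : ℝ) ^ (1 + α) : ℝ) : ℂ)
            * Complex.exp (Complex.I * (Real.pi : ℂ) * (α : ℂ) / 2)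
            * ((Real.Gamma ((3 + α) / 2) : ℝ) : ℂ) * gC α := by
      intro α hα
      have h' : ((Real.Gamma ((1 - α) / 2) : ℝ) : ℂ) ≠ 0 := Complex.ofReal_ne_zero.mpr (hΓ α hα)
      simp only [gC]
      push_cast
      field_simp
    have h1 : Tendsto (fun α : ℝ => ((E ^ ((1 + α) / 2) : ℝ) : ℂ)
        * (1 - ((‖a‖ ^ 2 : ℝ) : ℂ) * Complex.exp (Complex.I * (Real.pi : ℂ) * (α : ℂ)))) (𝓝 1)
        (𝓝 L) := by
      have := (Epow_tendsto hE).mul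
        ((tendsto_const_nhds (x := (1:ℂ))).sub
          ((tendsto_const_nhds (x := ((‖a‖ ^ 2 : ℝ) : ℂ))).mul exp_pi_alpha_tendsto))
      have hv : L = (E : ℂ) * (1 - ((‖a‖ ^ 2 : ℝ) : ℂ) * (-1)) := by
        rw [hLdef]; push_cast; ring
      rwa [← hv] at this
    have h2 := (second_term_tendsto γ)
    have := (h1.add h2).mono_left hFle
    rw [add_zero] at this
    exact this.congr' (by filter_upwards [self_mem_nhdsWithin] with α hα using (heq α hα).symm)
  -- assemble
  have habs : Continuous fun z : ℂ => ‖z‖ ^ 2 := continuous_norm.pow 2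
  constructor
  · have hq := hNT.div hD hL
    have hq2 := (habs.tendsto (0 / L)).comp hq
    norm_num at hq2
    refine hq2.congr' ?_
    filter_upwards [self_mem_nhdsWithin] with α hα
    simp only [Function.comp_apply, Pi.div_apply]
    rw [mul_div_mul_right _ _ (hgne α hα)]
    simp only [Tcoef]
    norm_cast
  · have hq : Tendsto (fun α : ℝ => ((((E ^ ((1 + α) / 2) * Real.Gamma ((1 - α) / 2) : ℝ) : ℂ)
        * (1 - ((‖a‖ ^ 2 : ℝ) : ℂ) * Complex.exp (Complex.I * (Real.pi : ℂ) * (α : ℂ)))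
        + Complex.I * (γ : ℂ) * (((2 : ℝ) ^ (1 + α) : ℝ) : ℂ)
          * Complex.exp (Complex.I * (Real.pi : ℂ) * (α : ℂ) / 2)
          * ((Real.Gamma ((3 + α) / 2) : ℝ) : ℂ)) * gC α) / (Dcoef α a γ E * gC α)) F (𝓝 (L / L)) :=
      hNR.div hD hL
    have hq2 := (habs.tendsto (L / L)).comp hq
    rw [div_self hL] at hq2
    simp only [norm_one, one_pow] at hq2
    refine hq2.congr' ?_
    filter_upwards [self_mem_nhdsWithin] with α hα
    simp only [Function.comp_apply, Pi.div_apply]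
    rw [mul_div_mul_right _ _ (hgne α hα)]
    simp only [Rcoef]
end
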